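/- Let d be an odd prime, k ≠ k', ω = exp(2πi/d), and define c^{(k,k')}_{mnm'n'} = Σ_{j=0}^{d-1} c^{(k,k')*}_{jm'} c^{(k,k')}_{jn'} c^{(k,k')}_{jm} c^{(k,k')*}_{jn} where c^{(k,k')}_{jm} = (1/√d)Σ_p ω^{p(j−m)+p²(k'−k)}. Then c^{(k,k')}_{mnm'n'} = ω^{ψ(k'−k)(m'²−m²−n'²+n²)} · Σ_j ω^{2ψ(k'−k)·j·(m−m'−n+n')}, and hence |c^{(k,k')}_{mnm'n'}| = d if (m−m'−n+n') ≡ 0 (mod d) and 0 otherwise. -/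

import Mathlib

/-- `c^{(k,k')}_{jm} = (1/√d) ∑_p ω^{p(j−m)+p²(k'−k)}`. -/
noncomputable def cOne (d : ℕ) (k k' : Fin d) (j m : Fin d) : ℂ :=
  ((1 / Real.sqrt d : ℝ) : ℂ) *
    ∑ p : Fin d, Complex.exp (2 * Real.pi * Complex.I *
      ((((p.val : ℤ) * ((j.val : ℤ) - (m.val : ℤ)) +
          (p.val : ℤ) ^ 2 * ((k'.val : ℤ) - (k.val : ℤ)) : ℤ) : ℂ)) / d)

/-- `c^{(k,k')}_{mnm'n'} = ∑_j c*_{jm'} c_{jn'} c_{jm} c*_{jn}`. -/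
noncomputable def cFour (d : ℕ) (k k' : Fin d) (m n m' n' : Fin d) : ℂ :=
  ∑ j : Fin d, (starRingEnd ℂ) (cOne d k k' j m') * cOne d k k' j n' *
    cOne d k k' j m * (starRingEnd ℂ) (cOne d k k' j n)

open Finset in
section
variable (d : ℕ)

noncomputable def ee (d : ℕ) (x : ℤ) : ℂ :=
  Complex.exp (2 * Real.pi * Complex.I * (x : ℂ) / d)

lemma ee_add (x y : ℤ) : ee d (x + y) = ee d x * ee d y := by
  rw [ee, ee, ee, ← Complex.exp_add]; congr 1; push_cast; ring

lemma ee_dvd [NeZero d] {x : ℤ} (h : (d : ℤ) ∣ x) : ee d x = 1 := by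
  obtain ⟨c, rfl⟩ := h
  have hd : (d : ℂ) ≠ 0 := Nat.cast_ne_zero.mpr (NeZero.ne d)
  have : (2 * Real.pi * Complex.I * (((d : ℤ) * c : ℤ) : ℂ) / d) = c * (2 * Real.pi * Complex.I) := by
    push_cast; field_simp
  rw [ee, this, Complex.exp_int_mul_two_pi_mul_I]

lemma ee_congr [NeZero d] {x y : ℤ} (h : (x : ZMod d) = (y : ZMod d)) : ee d x = ee d y := by
  have := (ZMod.intCast_eq_intCast_iff x y d).mp h
  obtain ⟨c, hc⟩ := this.dvd
  have hy : x = y + d * (-c) := by linarith [hc]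
  rw [hy, ee_add, ee_dvd d ⟨-c, rfl⟩, mul_one]

lemma ee_conj (x : ℤ) : (starRingEnd ℂ) (ee d x) = ee d (-x) := by
  rw [ee, ee, ← Complex.exp_conj]; congr 1
  simp [map_div₀, Complex.conj_I, map_ofNat]

lemma ee_nat_mul (n : ℕ) (x : ℤ) : ee d ((n : ℤ) * x) = (ee d x) ^ n := by
  rw [ee, ee, ← Complex.exp_nat_mul]; congr 1; push_cast; ring

lemma ee_eq_one_iff [NeZero d] (x : ℤ) : ee d x = 1 ↔ (d : ℤ) ∣ x := by
  constructor
  · intro h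
    rw [ee, Complex.exp_eq_one_iff] at h
    obtain ⟨c, hc⟩ := h
    have hπ : (2 * Real.pi * Complex.I) ≠ 0 := by
      simp [Real.pi_ne_zero, Complex.I_ne_zero, Complex.ofReal_ne_zero]
    have hd : (d : ℂ) ≠ 0 := Nat.cast_ne_zero.mpr (NeZero.ne d)
    have : (x : ℂ) = c * d := by
      field_simp at hc
      have := mul_right_cancel₀ hπ (by linear_combination (2 * Real.pi * Complex.I) * hc : (x:ℂ) * (2 * Real.pi * Complex.I) = (c * d) * (2 * Real.pi * Complex.I))
      exact this
    refine ⟨c, ?_⟩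
    have h2 : (x : ℂ) = (((d : ℤ) * c : ℤ) : ℂ) := by push_cast; linear_combination this
    exact_mod_cast h2
  · exact ee_dvd d

lemma ee_abs [NeZero d] (x : ℤ) : ‖ee d x‖ = 1 := by
  have h : ee d x * (starRingEnd ℂ) (ee d x) = 1 := by
    rw [ee_conj, ← ee_add, add_neg_cancel]
    exact ee_dvd d (dvd_zero _)
  have h2 := congrArg (‖·‖) h
  rw [norm_mul, Complex.norm_conj, norm_one] at h2
  nlinarith [norm_nonneg (ee d x)]

lemma sum_ee [NeZero d] (a : ℤ) :
    ∑ p : Fin d, ee d ((p.val : ℤ) * a) = if (d : ℤ) ∣ a then (d : ℂ) else 0 := by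
  have hrw : ∀ p : Fin d, ee d ((p.val : ℤ) * a) = (ee d a) ^ (p.val) := fun p => ee_nat_mul d p.val a
  simp only [hrw]
  rw [Fin.sum_univ_eq_sum_range]
  by_cases h : (d : ℤ) ∣ a
  · rw [if_pos h]; simp [ee_dvd d h]
  · have hne : ee d a ≠ 1 := fun hh => h ((ee_eq_one_iff d a).mp hh)
    rw [geom_sum_eq hne]
    have : ee d a ^ d = 1 := by
      rw [← ee_nat_mul, ee_dvd d ⟨a, by ring⟩]
    simp [this, h]

lemma sum_fin_zmod [NeZero d] (f : ℕ → ℂ) :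
    ∑ p : Fin d, f p.val = ∑ p : ZMod d, f p.val := by
  apply Finset.sum_nbij' (i := fun p => ((p.val : ZMod d))) (j := fun x => (⟨x.val, x.val_lt⟩ : Fin d))
  all_goals simp [ZMod.val_cast_of_lt, Fin.is_lt, Fin.ext_iff, Nat.mod_eq_of_lt]

lemma sum_ee_zmod [NeZero d] (a : ℤ) :
    ∑ p : ZMod d, ee d ((p.val : ℤ) * a) = if (d : ℤ) ∣ a then (d : ℂ) else 0 := by
  rw [← sum_fin_zmod d (fun v => ee d ((v : ℤ) * a))]
  exact sum_ee d a
end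

lemma cOne_eq (d : ℕ) [NeZero d] (k k' j m : Fin d) :
    cOne d k k' j m = ((1 / Real.sqrt d : ℝ) : ℂ) *
      ∑ p : ZMod d, ee d ((p.val : ℤ) * ((j.val : ℤ) - (m.val : ℤ)) +
        (p.val : ℤ) ^ 2 * ((k'.val : ℤ) - (k.val : ℤ))) := by
  rw [cOne]
  congr 1
  exact sum_fin_zmod d (fun v => ee d ((v : ℤ) * ((j.val : ℤ) - (m.val : ℤ)) +
        (v : ℤ) ^ 2 * ((k'.val : ℤ) - (k.val : ℤ))))

lemma pair (d : ℕ) [NeZero d] (ψ : ℤ) (k k' : Fin d)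
    (h1 : ((4 * ψ * ((k'.val : ℤ) - (k.val : ℤ)) : ℤ) : ZMod d) = 1)
    (j a b : Fin d) :
    (starRingEnd ℂ) (cOne d k k' j a) * cOne d k k' j b
      = ee d (2 * ψ * ((b.val : ℤ) - (a.val : ℤ)) * (j.val : ℤ) +
          ψ * ((a.val : ℤ) ^ 2 - (b.val : ℤ) ^ 2)) := by
  have hd0 : (d : ℂ) ≠ 0 := Nat.cast_ne_zero.mpr (NeZero.ne d)
  have h1' : 4 * (ψ : ZMod d) * ((k'.val : ZMod d) - (k.val : ZMod d)) = 1 := by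
    push_cast at h1; exact h1
  set Δ : ℤ := (k'.val : ℤ) - (k.val : ℤ) with hΔ
  set t₀ : ZMod d := ((2 * ψ * ((b.val : ℤ) - (a.val : ℤ)) : ℤ) : ZMod d) with ht₀
  have step1 : ∀ p : ZMod d,
      ∑ q : ZMod d, ee d (-((p.val : ℤ) * ((j.val : ℤ) - (a.val : ℤ)) + (p.val : ℤ) ^ 2 * Δ)) *
          ee d ((q.val : ℤ) * ((j.val : ℤ) - (b.val : ℤ)) + (q.val : ℤ) ^ 2 * Δ)
        = ∑ t : ZMod d, ee d ((p.val : ℤ) * ((a.val : ℤ) - (b.val : ℤ) + 2 * (t.val : ℤ) * Δ)) *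
            ee d ((t.val : ℤ) * ((j.val : ℤ) - (b.val : ℤ)) + (t.val : ℤ) ^ 2 * Δ) := by
    intro p
    rw [← Equiv.sum_comp (Equiv.addLeft p)
      (fun q : ZMod d => ee d (-((p.val : ℤ) * ((j.val : ℤ) - (a.val : ℤ)) + (p.val : ℤ) ^ 2 * Δ)) *
          ee d ((q.val : ℤ) * ((j.val : ℤ) - (b.val : ℤ)) + (q.val : ℤ) ^ 2 * Δ))]
    refine Finset.sum_congr rfl fun t _ => ?_
    simp only [Equiv.coe_addLeft]
    rw [← ee_add, ← ee_add]
    apply ee_congr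
    push_cast [ZMod.natCast_zmod_val]
    ring
  have step2 : ∀ t : ZMod d,
      ((d : ℤ) ∣ ((a.val : ℤ) - (b.val : ℤ) + 2 * (t.val : ℤ) * Δ)) ↔ t = t₀ := by
    intro t
    rw [← ZMod.intCast_zmod_eq_zero_iff_dvd]
    constructor
    · intro hz
      push_cast [hΔ, ZMod.natCast_zmod_val] at hz
      rw [ht₀]
      push_cast [hΔ]
      linear_combination (2 * (ψ : ZMod d)) * hz - t * h1'
    · intro ht
      rw [ht, ht₀]
      push_cast [hΔ, ZMod.natCast_zmod_val]
      linear_combination ((b.val : ZMod d) - (a.val : ZMod d)) * h1'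
  have hsum :
      (∑ p : ZMod d, ee d (-((p.val : ℤ) * ((j.val : ℤ) - (a.val : ℤ)) + (p.val : ℤ) ^ 2 * Δ))) *
        (∑ q : ZMod d, ee d ((q.val : ℤ) * ((j.val : ℤ) - (b.val : ℤ)) + (q.val : ℤ) ^ 2 * Δ))
      = (d : ℂ) * ee d ((t₀.val : ℤ) * ((j.val : ℤ) - (b.val : ℤ)) + (t₀.val : ℤ) ^ 2 * Δ) := by
    rw [Finset.sum_mul_sum]
    rw [Finset.sum_congr rfl (fun p _ => step1 p)]
    rw [Finset.sum_comm]
    have inner : ∀ t : ZMod d,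
        ∑ p : ZMod d, ee d ((p.val : ℤ) * ((a.val : ℤ) - (b.val : ℤ) + 2 * (t.val : ℤ) * Δ)) *
            ee d ((t.val : ℤ) * ((j.val : ℤ) - (b.val : ℤ)) + (t.val : ℤ) ^ 2 * Δ)
          = if t = t₀ then (d : ℂ) * ee d ((t.val : ℤ) * ((j.val : ℤ) - (b.val : ℤ)) +
              (t.val : ℤ) ^ 2 * Δ) else 0 := by
      intro t
      rw [← Finset.sum_mul, sum_ee_zmod]
      rw [if_congr (step2 t) rfl rfl, ite_mul, zero_mul]
    rw [Finset.sum_congr rfl (fun t _ => inner t)]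
    rw [Finset.sum_ite_eq' Finset.univ t₀, if_pos (Finset.mem_univ _)]
  rw [cOne_eq, cOne_eq, map_mul, map_sum]
  simp only [ee_conj, Complex.conj_ofReal]
  rw [mul_mul_mul_comm]
  have hrr : ((1 / Real.sqrt d : ℝ) : ℂ) * ((1 / Real.sqrt d : ℝ) : ℂ) = 1 / (d : ℂ) := by
    rw [← Complex.ofReal_mul]
    have : (1 / Real.sqrt d) * (1 / Real.sqrt d) = 1 / (d : ℝ) := by
      rw [div_mul_div_comm, one_mul, Real.mul_self_sqrt (Nat.cast_nonneg d)]
    rw [this]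
    push_cast
    ring
  rw [hsum, hrr, one_div, inv_mul_cancel_left₀ hd0]
  apply ee_congr
  push_cast [ht₀, hΔ, ZMod.natCast_zmod_val]
  linear_combination (ψ : ZMod d) * ((b.val : ZMod d) - (a.val : ZMod d)) ^ 2 * h1'

theorem stmt_16 (d : ℕ) (hd : d.Prime) (hodd : Odd d) (k k' : Fin d) (hkk : k ≠ k')
    (ψ : ℤ) (hψ : (4 * ψ * ((k'.val : ℤ) - (k.val : ℤ))) % (d : ℤ) = 1 % (d : ℤ))
    (m n m' n' : Fin d) :
    cFour d k k' m n m' n'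
      = Complex.exp (2 * Real.pi * Complex.I *
          (((ψ * ((m'.val : ℤ) ^ 2 - (m.val : ℤ) ^ 2 - (n'.val : ℤ) ^ 2 +
              (n.val : ℤ) ^ 2) : ℤ) : ℂ)) / d) *
        ∑ j : Fin d, Complex.exp (2 * Real.pi * Complex.I *
          (((2 * ψ * (j.val : ℤ) * ((m.val : ℤ) - (m'.val : ℤ) - (n.val : ℤ) +
              (n'.val : ℤ)) : ℤ) : ℂ)) / d) ∧
    ‖cFour d k k' m n m' n'‖
      = if ((m.val : ℤ) - (m'.val : ℤ) - (n.val : ℤ) + (n'.val : ℤ)) % (d : ℤ) = 0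
        then (d : ℝ) else 0 := by
  haveI : NeZero d := ⟨hd.ne_zero⟩
  have h1 : ((4 * ψ * ((k'.val : ℤ) - (k.val : ℤ)) : ℤ) : ZMod d) = 1 := by
    have := (ZMod.intCast_eq_intCast_iff' _ _ d).mpr hψ
    simpa using this
  have h1' : 4 * (ψ : ZMod d) * ((k'.val : ZMod d) - (k.val : ZMod d)) = 1 := by
    push_cast at h1; exact h1
  set S : ℤ := (m.val : ℤ) - (m'.val : ℤ) - (n.val : ℤ) + (n'.val : ℤ) with hS
  set C : ℤ := ψ * ((m'.val : ℤ) ^ 2 - (m.val : ℤ) ^ 2 - (n'.val : ℤ) ^ 2 + (n.val : ℤ) ^ 2)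
    with hC
  have hterm : ∀ j : Fin d, (starRingEnd ℂ) (cOne d k k' j m') * cOne d k k' j n' *
      cOne d k k' j m * (starRingEnd ℂ) (cOne d k k' j n)
      = ee d C * ee d (2 * ψ * (j.val : ℤ) * S) := by
    intro j
    have e1 := pair d ψ k k' h1 j m' m
    have e2 := pair d ψ k k' h1 j n n'
    calc (starRingEnd ℂ) (cOne d k k' j m') * cOne d k k' j n' *
            cOne d k k' j m * (starRingEnd ℂ) (cOne d k k' j n)
        = ((starRingEnd ℂ) (cOne d k k' j m') * cOne d k k' j m) *
            ((starRingEnd ℂ) (cOne d k k' j n) * cOne d k k' j n') := by ring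
      _ = ee d C * ee d (2 * ψ * (j.val : ℤ) * S) := by
          rw [e1, e2, ← ee_add, ← ee_add]
          congr 1
          rw [hS, hC]; ring
  have hc4 : cFour d k k' m n m' n'
      = ee d C * ∑ j : Fin d, ee d (2 * ψ * (j.val : ℤ) * S) := by
    rw [cFour, Finset.sum_congr rfl (fun j _ => hterm j), ← Finset.mul_sum]
  have hiff : (d : ℤ) ∣ 2 * ψ * S ↔ (d : ℤ) ∣ S := by
    constructor
    · intro h
      rw [← ZMod.intCast_zmod_eq_zero_iff_dvd] at h ⊢
      push_cast [hS] at h ⊢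
      linear_combination (2 * ((k'.val : ZMod d) - (k.val : ZMod d))) * h -
        ((m.val : ZMod d) - (m'.val : ZMod d) - (n.val : ZMod d) + (n'.val : ZMod d)) * h1'
    · intro h
      exact h.mul_left (2 * ψ)
  have hsum2 : ∑ j : Fin d, ee d (2 * ψ * (j.val : ℤ) * S)
      = if (d : ℤ) ∣ S then (d : ℂ) else 0 := by
    rw [Finset.sum_congr rfl (fun j _ => by
      rw [show 2 * ψ * ((j.val : ℕ) : ℤ) * S = ((j.val : ℕ) : ℤ) * (2 * ψ * S) from by ring])]
    rw [sum_ee, if_congr hiff rfl rfl]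
  constructor
  · rw [hc4]; rfl
  · rw [hc4, hsum2, norm_mul, ee_abs, one_mul]
    by_cases hdvd : (d : ℤ) ∣ S
    · rw [if_pos hdvd, if_pos (Int.emod_eq_zero_of_dvd hdvd)]
      exact Complex.norm_natCast d
    · rw [if_neg hdvd, if_neg (fun h => hdvd (Int.dvd_of_emod_eq_zero h))]
      exact norm_zero
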